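/- For the square [−1,1]² floating with three submerged corners, waterline through (x_R,1) on the top side and (−1,y_L) on the left side with 0 < θ < π/2 and submerged area 4R (R ≥ 1/2), the feasibility constraints 0 ≤ 1 + x_R ≤ 2 and −1 ≤ y_L ≤ 1 are equivalent to 2 − 2R ≤ tanθ ≤ 1/(2 − 2R). -/
import Mathlib


open Real

/-- Feasibility range of the waterline slope for the square `[-1,1]²` floating
with three submerged corners (`R ≥ 1/2`): the geometric constraints
`0 ≤ 1 + x_R ≤ 2` and `-1 ≤ y_L ≤ 1` are equivalent to
`2 - 2R ≤ tan θ ≤ 1/(2 - 2R)`. -/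
theorem square_adjacent_sides_angle_range (θ R xR yL : ℝ)
    (hθ : θ ∈ Set.Ioo (0:ℝ) (Real.pi / 2))
    (hR : R ∈ Set.Ico (1/2 : ℝ) 1)
    (hxR : 0 ≤ 1 + xR)
    (h1 : (1 + xR) ^ 2 = (8 - 8 * R) / Real.tan θ)
    (hyL : yL = -(1 + xR) * Real.tan θ + 1) :
    (0 ≤ 1 + xR ∧ 1 + xR ≤ 2 ∧ -1 ≤ yL ∧ yL ≤ 1) ↔
      (2 - 2 * R ≤ Real.tan θ ∧ Real.tan θ ≤ 1 / (2 - 2 * R)) := by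
  have ht : 0 < Real.tan θ := Real.tan_pos_of_pos_of_lt_pi_div_two hθ.1 hθ.2
  have hc : 0 < 2 - 2 * R := by linarith [hR.2]
  set t := Real.tan θ
  set s := 1 + xR with hs
  have h2 : s ^ 2 * t = 8 - 8 * R := by
    field_simp at h1; linarith
  have hst : 0 ≤ s * t := mul_nonneg hxR ht.le
  constructor
  · rintro ⟨-, h2', h3, -⟩
    constructor
    · nlinarith
    · rw [le_div_iff₀ hc]
      have hst2 : s * t ≤ 2 := by rw [hyL] at h3; linarith
      nlinarith
  · rintro ⟨hl, hr⟩
    refine ⟨hxR, ?_, ?_, ?_⟩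
    · nlinarith
    · rw [hyL]
      have : (s * t) ^ 2 ≤ 4 := by
        rw [le_div_iff₀ hc] at hr; nlinarith
      nlinarith
    · rw [hyL]; linarith
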